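/- The series ∑_{n=1}^∞ 1/(1 + n²) converges and 1 + 2·∑_{n=1}^∞ 1/(1+n²) = π·coth(π). -/

import Mathlib

open Real Complex MeasureTheory Set intervalIntegral

noncomputable section

lemma key_integrand (n : ℤ) (x : ℝ) :
    (fourier (-n) (x : AddCircle ((0:ℝ) + 2 * π - 0)) : ℂ) • Complex.cosh (x - π)
      = Complex.exp (-(π:ℂ)) / 2 * Complex.exp ((1 - n * I) * x)
        + Complex.exp (π:ℂ) / 2 * Complex.exp ((-1 - n * I) * x) := by
  have hπ : (π:ℂ) ≠ 0 := Complex.ofReal_ne_zero.mpr pi_ne_zero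
  rw [fourier_coe_apply, smul_eq_mul, Complex.cosh]
  push_cast
  rw [show 2 * (π:ℂ) * I * (-n) * x / (0 + 2 * π - 0) = (-((n:ℂ) * I)) * x by
    field_simp; ring]
  rw [← mul_div_assoc, mul_add, ← Complex.exp_add, ← Complex.exp_add,
    div_mul_eq_mul_div, div_mul_eq_mul_div, ← Complex.exp_add, ← Complex.exp_add,
    ← add_div]
  congr 3 <;> ring

lemma c1_ne (n : ℤ) : (1 : ℂ) - n * I ≠ 0 := by
  intro h
  have := congrArg Complex.re h
  simp at this

lemma c2_ne (n : ℤ) : (-1 : ℂ) - n * I ≠ 0 := by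
  intro h
  have := congrArg Complex.re h
  simp at this

lemma cosh_fourierCoeffOn (n : ℤ) :
    fourierCoeffOn (by positivity : (0:ℝ) < 0 + 2 * π)
      (fun x : ℝ => Complex.cosh (x - π)) n
      = ((Real.sinh π / (π * (1 + (n : ℝ)^2)) : ℝ) : ℂ) := by
  have hπ : (π:ℂ) ≠ 0 := Complex.ofReal_ne_zero.mpr pi_ne_zero
  rw [fourierCoeffOn_eq_integral]
  simp_rw [key_integrand n]
  rw [intervalIntegral.integral_add
      (by apply Continuous.intervalIntegrable; fun_prop)
      (by apply Continuous.intervalIntegrable; fun_prop),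
    intervalIntegral.integral_const_mul, intervalIntegral.integral_const_mul,
    integral_exp_mul_complex (c1_ne n), integral_exp_mul_complex (c2_ne n)]
  have e1 : Complex.exp ((1 - n * I) * (((0:ℝ) + 2 * π : ℝ) : ℂ)) = Complex.exp (2 * π) := by
    rw [show ((1:ℂ) - n * I) * (((0:ℝ) + 2 * π : ℝ) : ℂ) = 2 * π + (-n : ℤ) * (2 * π * I) by push_cast; ring,
      Complex.exp_add, Complex.exp_int_mul_two_pi_mul_I, mul_one]
  have e2 : Complex.exp ((-1 - n * I) * (((0:ℝ) + 2 * π : ℝ) : ℂ)) = Complex.exp (-(2 * π)) := by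
    rw [show ((-1:ℂ) - n * I) * (((0:ℝ) + 2 * π : ℝ) : ℂ) = -(2 * π) + (-n : ℤ) * (2 * π * I) by push_cast; ring,
      Complex.exp_add, Complex.exp_int_mul_two_pi_mul_I, mul_one]
  rw [e1, e2]
  push_cast
  rw [mul_zero, mul_zero, Complex.exp_zero, real_smul, Complex.sinh]
  have hI : ((1:ℂ) - n * I) * (1 + n * I) = 1 + (n:ℂ)^2 := by
    linear_combination -(n:ℂ)^2 * Complex.I_sq
  have h2 : (1:ℂ) + n * I ≠ 0 := by
    intro h; have := congrArg Complex.re h; simp at this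
  have hs : Complex.exp (π:ℂ) ≠ 0 := Complex.exp_ne_zero _
  have hn2 : (1:ℂ) + (n:ℂ)^2 ≠ 0 := by
      rw [← hI]; exact mul_ne_zero (c1_ne n) h2
  rw [show ((2:ℂ) * π) = π + π by ring, Complex.exp_add, Complex.exp_neg, Complex.exp_neg]
  push_cast
  field_simp [c1_ne n, c2_ne n, Complex.exp_add]
  rw [show Complex.exp (↑π * (1 + 1)) = Complex.exp (π:ℂ) ^ 2 by rw [mul_add, mul_one, Complex.exp_add, sq]]
  linear_combination (2 * (π:ℂ) * Complex.exp (π:ℂ) ^ 2 * (Complex.exp (π:ℂ) ^ 2 - 1)) * hI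

lemma summable_nat_one_div_one_add_sq : Summable (fun n : ℕ => 1 / (1 + (n:ℝ)^2)) := by
  have h0 : Summable (fun n : ℕ => 1 / ((n:ℝ))^2) := by
    rw [Real.summable_one_div_nat_pow]
    exact one_lt_two
  have h1 : Summable (fun n : ℕ => 2 * (1 / (((n:ℝ)+1))^2)) := by
    refine Summable.mul_left 2 ?_
    have := (summable_nat_add_iff (f := fun n : ℕ => 1 / ((n:ℝ))^2) 1).mpr h0
    refine this.congr fun n => by push_cast; ring
  refine h1.of_nonneg_of_le (fun n => by positivity) fun n => ?_
  rw [div_le_iff₀ (by positivity), mul_comm]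
  have h2 : ((n:ℝ)+1)^2 ≤ 2 * (1 + (n:ℝ)^2) := by nlinarith [sq_nonneg ((n:ℝ) - 1)]
  calc (1:ℝ) = ((n:ℝ)+1)^2 * (1/((n:ℝ)+1)^2) := by field_simp
    _ ≤ 2 * (1 + (n:ℝ)^2) * (1/((n:ℝ)+1)^2) := by
        exact mul_le_mul_of_nonneg_right h2 (by positivity)
    _ = (1 + (n:ℝ)^2) * (2 * (1/((n:ℝ)+1)^2)) := by ring

lemma summable_int_one_div_one_add_sq : Summable (fun n : ℤ => 1 / (1 + (n:ℝ)^2)) := by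
  apply Summable.of_nat_of_neg <;>
    exact summable_nat_one_div_one_add_sq.congr fun n => by push_cast; ring_nf

lemma key_hasSum :
    HasSum (fun n : ℤ => Real.sinh π / (π * (1 + (n:ℝ)^2))) (Real.cosh π) := by
  haveI : Fact ((0:ℝ) < 2 * π) := ⟨by positivity⟩
  set F : ℝ → ℂ := fun x => Complex.cosh (x - π) with hFdef
  have hF : F 0 = F (2 * π) := by
    simp only [hFdef]
    norm_num
    rw [show 2*(π:ℂ) - π = (π:ℂ) by ring]
  have hcont : Continuous (AddCircle.liftIco (2*π) 0 F) :=
    AddCircle.liftIco_zero_continuous hF (Continuous.continuousOn (by fun_prop))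
  set f : C(AddCircle (2*π), ℂ) := ⟨_, hcont⟩ with hfdef
  have hcoeff : ∀ n : ℤ,
      fourierCoeff (⇑f) n = ((Real.sinh π / (π * (1 + (n:ℝ)^2)) : ℝ) : ℂ) := by
    intro n
    have : fourierCoeff (⇑f) n = fourierCoeffOn (lt_add_of_pos_right 0 Fact.out) F n :=
      fourierCoeff_liftIco_eq F n
    rw [this]
    exact cosh_fourierCoeffOn n
  have hSr : Summable (fun n : ℤ => Real.sinh π / (π * (1 + (n:ℝ)^2))) := by
    refine (summable_int_one_div_one_add_sq.mul_left (Real.sinh π / π)).congr fun n => ?_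
    field_simp
  have hsummable : Summable (fourierCoeff (⇑f)) :=
    (Complex.summable_ofReal.mpr hSr).congr fun n => (hcoeff n).symm
  have hps := has_pointwise_sum_fourier_series_of_summable hsummable (0 : AddCircle (2*π))
  have hf0 : f 0 = ((Real.cosh π : ℝ) : ℂ) := by
    show AddCircle.liftIco (2*π) 0 F 0 = _
    rw [← QuotientAddGroup.mk_zero, AddCircle.liftIco_zero_coe_apply (by constructor <;> [rfl; positivity])]
    simp only [hFdef]
    rw [show ((0:ℝ):ℂ) - π = -(π:ℂ) by push_cast; ring, Complex.cosh_neg, Complex.ofReal_cosh]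
  rw [hf0] at hps
  rw [← Complex.hasSum_ofReal]
  have heq : (fun i : ℤ => fourierCoeff (⇑f) i • (fourier i) (0 : AddCircle (2*π)))
      = fun n : ℤ => ((Real.sinh π / (π * (1 + (n:ℝ)^2)) : ℝ) : ℂ) := by
    funext n
    rw [hcoeff n, smul_eq_mul, fourier_eval_zero, mul_one]
  rw [heq] at hps
  exact hps

end

open Real

theorem stmt1 :
    Summable (fun n : ℕ+ => 1 / (1 + (n : ℝ)^2)) ∧
    1 + 2 * ∑' n : ℕ+, 1 / (1 + (n : ℝ)^2) = π * (Real.cosh π / Real.sinh π) := by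
  have hπ : (0:ℝ) < π := pi_pos
  have hs : Real.sinh π ≠ 0 := ne_of_gt (by rwa [Real.sinh_pos_iff])
  set M : ℝ := π * (Real.cosh π / Real.sinh π) with hM
  have h1 : HasSum (fun n : ℤ => 1 / (1 + (n:ℝ)^2)) M := by
    have h := key_hasSum.mul_left (π / Real.sinh π)
    have heq : (fun n : ℤ => π / Real.sinh π * (Real.sinh π / (π * (1 + (n:ℝ)^2))))
        = fun n : ℤ => 1 / (1 + (n:ℝ)^2) := by
      funext n
      have hn2 : (1:ℝ) + (n:ℝ)^2 ≠ 0 := by positivity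
      field_simp
    rw [heq] at h
    have : π / Real.sinh π * Real.cosh π = M := by rw [hM]; field_simp
    rwa [this] at h
  have h3 : HasSum (fun n : ℕ => 2 * (1 / (1 + (n:ℝ)^2))) (M + 1) := by
    have h2 := h1.nat_add_neg
    simp only [Int.cast_neg, Int.cast_natCast, neg_sq, Int.cast_zero] at h2
    rw [show (fun n : ℕ => 1 / (1 + (n:ℝ)^2) + 1 / (1 + (n:ℝ)^2))
        = fun n : ℕ => 2 * (1 / (1 + (n:ℝ)^2)) from funext fun n => by ring] at h2
    convert h2 using 1
    norm_num
  have h4 : HasSum (fun n : ℕ => 2 * (1 / (1 + ((n+1:ℕ):ℝ)^2))) (M - 1) := by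
    refine (hasSum_nat_add_iff (f := fun n : ℕ => 2 * (1 / (1 + (n:ℝ)^2))) 1).mpr ?_
    convert h3 using 1
    norm_num
    rfl
    rw [Finset.sum_range_one]
    push_cast
    ring
  have h5 : HasSum (fun p : ℕ+ => 2 * (1 / (1 + (p:ℝ)^2))) (M - 1) := by
    rw [← Equiv.hasSum_iff (Equiv.pnatEquivNat.symm)]
    refine h4.congr fun n => ?_
    simp [Equiv.pnatEquivNat, Function.comp, Nat.succPNat]
  have h6 : HasSum (fun p : ℕ+ => 1 / (1 + (p:ℝ)^2)) ((M - 1)/2) := by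
    rw [show (fun p : ℕ+ => 1 / (1 + (p:ℝ)^2))
        = fun p : ℕ+ => 2 * (1 / (1 + (p:ℝ)^2)) / 2 from funext fun p => by ring]
    exact h5.div_const 2
  refine ⟨h6.summable, ?_⟩
  rw [h6.tsum_eq]
  rw [hM]
  ring
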